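/- Reduction to one-dimensional flow: suppose C̄ is a constant unimodular symmetric positive definite 3×3 matrix and φ : [t₀, T) → ℝ solves φ' = (μ/η)·(det(C_i⁰ + φ·C̄))^{1/3} with φ(t₀) = 0, where C_i⁰ is symmetric positive definite with det C_i⁰ = 1. Then C_i(t) := (det(C_i⁰ + φ(t)C̄))^{-1/3}·(C_i⁰ + φ(t)C̄) solves the matrix ODE Ċ_i = (μ/η)·(C̄ C_i^{-1})^D·C_i with C_i(t₀) = C_i⁰. -/

import Mathlib

open Matrix

/-- Deviatoric part of a 3×3 matrix. -/
noncomputable def dev (A : Matrix (Fin 3) (Fin 3) ℝ) : Matrix (Fin 3) (Fin 3) ℝ :=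
  A - (A.trace / 3) • (1 : Matrix (Fin 3) (Fin 3) ℝ)

lemma dev_smul' (r : ℝ) (A : Matrix (Fin 3) (Fin 3) ℝ) : dev (r • A) = r • dev A := by
  simp [dev, Matrix.trace_smul, smul_sub, smul_smul, smul_eq_mul, mul_div_assoc]

lemma rpow_third_nonneg (x : ℝ) : 0 ≤ x ^ ((1:ℝ)/3) := by
  rcases le_or_gt 0 x with h | h
  · exact Real.rpow_nonneg h _
  · rw [Real.rpow_def_of_neg h]
    have hc : Real.cos ((1:ℝ)/3 * Real.pi) = 1/2 := by
      rw [show (1:ℝ)/3 * Real.pi = Real.pi / 3 by ring, Real.cos_pi_div_three]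
    rw [hc]
    positivity

lemma posSemidef_smul' {A : Matrix (Fin 3) (Fin 3) ℝ} (hA : A.PosSemidef) {c : ℝ}
    (hc : 0 ≤ c) : (c • A).PosSemidef := by
  refine ⟨?_, fun x => ?_⟩
  · unfold Matrix.IsHermitian
    rw [Matrix.conjTranspose_smul, star_trivial, hA.1.eq]
  · exact (hA.smul hc).2 x

/-- Jacobi's formula for the pencil `A + s • B` of 3×3 matrices. -/
lemma hasDerivAt_det_add_smul (A B : Matrix (Fin 3) (Fin 3) ℝ) (x : ℝ) :
    HasDerivAt (fun s => (A + s • B).det) ((B * (A + x • B).adjugate).trace) x := by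
  have base : ∀ i j : Fin 3, HasDerivAt (fun s : ℝ => A i j + s * B i j) (B i j) x :=
    fun i j => by simpa using ((hasDerivAt_id x).mul_const (B i j)).const_add (A i j)
  have H := (((((((base 0 0).mul (base 1 1)).mul (base 2 2)).sub
      (((base 0 0).mul (base 1 2)).mul (base 2 1))).sub
      (((base 0 1).mul (base 1 0)).mul (base 2 2))).add
      (((base 0 1).mul (base 1 2)).mul (base 2 0))).add
      (((base 0 2).mul (base 1 0)).mul (base 2 1))).sub
      (((base 0 2).mul (base 1 1)).mul (base 2 0))
  refine HasDerivAt.congr_deriv (HasDerivAt.congr_of_eventuallyEq H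
    (Filter.Eventually.of_forall fun s => ?_)) (Eq.symm ?_)
  · 
    simp [Matrix.det_fin_three, Matrix.add_apply, Matrix.smul_apply, smul_eq_mul]
  · simp [Matrix.trace_fin_three, Matrix.mul_apply, Matrix.adjugate_fin_three,
      Fin.sum_univ_three, Matrix.add_apply, Matrix.smul_apply, smul_eq_mul]
    ring

/-- Reduction of the six-dimensional flow rule to a one-dimensional ODE:
the unimodular parts of `Ci0 + φ(t) C̄` solve the evolution equation. -/
theorem reduction_to_one_dimensional_flow (μ η t₀ T : ℝ) (hμ : 0 < μ) (hη : 0 < η)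
    (Cbar Ci0 : Matrix (Fin 3) (Fin 3) ℝ)
    (hCbar : Cbar.PosDef) (hCbar_det : Cbar.det = 1)
    (hCi0 : Ci0.PosDef) (hCi0_det : Ci0.det = 1)
    (φ : ℝ → ℝ) (hφ₀ : φ t₀ = 0)
    (hφ : ∀ t ∈ Set.Ico t₀ T,
      HasDerivAt φ (μ / η * (Ci0 + φ t • Cbar).det ^ ((1 : ℝ) / 3)) t)
    (Ci : ℝ → Matrix (Fin 3) (Fin 3) ℝ)
    (hCi : ∀ t, Ci t =
      ((Ci0 + φ t • Cbar).det ^ (-(1 : ℝ) / 3)) • (Ci0 + φ t • Cbar)) :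
    Ci t₀ = Ci0 ∧
      ∀ t ∈ Set.Ico t₀ T, ∀ i j,
        HasDerivAt (fun s => Ci s i j)
          (((μ / η) • (dev (Cbar * (Ci t)⁻¹) * Ci t)) i j) t := by
  -- φ is nonnegative on [t₀, T)
  have hmono : MonotoneOn φ (Set.Ico t₀ T) := by
    apply monotoneOn_of_deriv_nonneg (convex_Ico _ _)
    · exact fun s hs => (hφ s hs).continuousAt.continuousWithinAt
    · rw [interior_Ico]
      exact fun s hs =>
        ((hφ s (Set.Ioo_subset_Ico_self hs)).differentiableAt).differentiableWithinAt
    · intro s hs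
      rw [interior_Ico] at hs
      rw [(hφ s (Set.Ioo_subset_Ico_self hs)).deriv]
      exact mul_nonneg (by positivity) (rpow_third_nonneg _)
  have hφnonneg : ∀ t ∈ Set.Ico t₀ T, 0 ≤ φ t := by
    intro t ht
    have ht₀ : t₀ ∈ Set.Ico t₀ T := ⟨le_refl _, lt_of_le_of_lt ht.1 ht.2⟩
    calc (0:ℝ) = φ t₀ := hφ₀.symm
      _ ≤ φ t := hmono ht₀ ht ht.1
  have hdetpos : ∀ t ∈ Set.Ico t₀ T, 0 < (Ci0 + φ t • Cbar).det := by
    intro t ht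
    exact (hCi0.add_posSemidef (posSemidef_smul' hCbar.posSemidef (hφnonneg t ht))).det_pos
  constructor
  · rw [hCi t₀, hφ₀]
    simp [hCi0_det]
  · intro t ht i j
    have hd : 0 < (Ci0 + φ t • Cbar).det := hdetpos t ht
    set M : Matrix (Fin 3) (Fin 3) ℝ := Ci0 + φ t • Cbar with hMdef
    set d : ℝ := M.det with hddef
    have hφ' := hφ t ht
    have hunit : IsUnit M.det := (ne_of_gt hd).isUnit
    set Tt : ℝ := (Cbar * M.adjugate).trace with hTdef
    -- derivative of the determinant along s
    have hgd : HasDerivAt (fun s => (Ci0 + φ s • Cbar).det)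
        (Tt * (μ / η * d ^ ((1:ℝ)/3))) t := by
      simpa [Function.comp_def] using (hasDerivAt_det_add_smul Ci0 Cbar (φ t)).comp t hφ'
    have hrpow : HasDerivAt (fun s => (Ci0 + φ s • Cbar).det ^ (-(1:ℝ)/3))
        ((-(1:ℝ)/3) * d ^ ((-(1:ℝ)/3) - 1) * (Tt * (μ / η * d ^ ((1:ℝ)/3)))) t := by
      simpa [Function.comp_def] using
        (Real.hasDerivAt_rpow_const (x := d) (p := -(1:ℝ)/3) (Or.inl (ne_of_gt hd))).comp t hgd
    have hentry : HasDerivAt (fun s => Ci0 i j + φ s * Cbar i j)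
        ((μ / η * d ^ ((1:ℝ)/3)) * Cbar i j) t :=
      (hφ'.mul_const (Cbar i j)).const_add (Ci0 i j)
    have hprod := hrpow.mul hentry
    have hfun : (fun s => Ci s i j) =
        (fun s => (Ci0 + φ s • Cbar).det ^ (-(1:ℝ)/3) * (Ci0 i j + φ s * Cbar i j)) := by
      funext s
      rw [hCi s]
      simp [Matrix.smul_apply, Matrix.add_apply, smul_eq_mul]
    rw [hfun]
    -- identify the claimed derivative with the computed one
    have hCit : Ci t = d ^ (-(1:ℝ)/3) • M := hCi t
    have hone : d ^ ((1:ℝ)/3) * d ^ (-(1:ℝ)/3) = 1 := by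
      rw [← Real.rpow_add hd]; norm_num
    have hone' : d ^ (-(1:ℝ)/3) * d ^ ((1:ℝ)/3) = 1 := by
      rw [mul_comm]; exact hone
    have h2 : d ^ ((-(1:ℝ)/3) - 1) * d ^ ((1:ℝ)/3) = d⁻¹ := by
      rw [← Real.rpow_add hd]
      norm_num [Real.rpow_neg_one]
    have hinv : (Ci t)⁻¹ = (d ^ ((1:ℝ)/3)) • M⁻¹ := by
      apply Matrix.inv_eq_right_inv
      rw [hCit, Matrix.smul_mul, Matrix.mul_smul, smul_smul,
        Matrix.mul_nonsing_inv _ hunit, hone', one_smul]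
    have hXM : Cbar * M⁻¹ * M = Cbar := by
      rw [Matrix.mul_assoc, Matrix.nonsing_inv_mul _ hunit, Matrix.mul_one]
    have htrace : (Cbar * M⁻¹).trace = d⁻¹ * Tt := by
      rw [Matrix.inv_def, Ring.inverse_eq_inv, Matrix.mul_smul, Matrix.trace_smul,
        smul_eq_mul, ← hddef, hTdef]
    have htarget : (μ / η) • (dev (Cbar * (Ci t)⁻¹) * Ci t) =
        (μ / η) • (Cbar - (((Cbar * M⁻¹).trace)/3) • M) := by
      have hdevarg : Cbar * ((d ^ ((1:ℝ)/3)) • M⁻¹) = (d ^ ((1:ℝ)/3)) • (Cbar * M⁻¹) :=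
        Matrix.mul_smul _ _ _
      rw [hinv, hCit, hdevarg, dev_smul', Matrix.smul_mul, Matrix.mul_smul, smul_smul,
        smul_smul, show μ / η * d ^ ((1:ℝ)/3) * d ^ (-(1:ℝ)/3) = μ / η from by
          rw [mul_assoc, hone, mul_one]]
      congr 1
      unfold dev
      rw [Matrix.sub_mul, Matrix.smul_mul, Matrix.one_mul, hXM]
    refine hprod.congr_deriv (Eq.symm ?_)
    rw [htarget]
    have hMij : M i j = Ci0 i j + φ t * Cbar i j := by
      simp [hMdef, Matrix.add_apply, Matrix.smul_apply, smul_eq_mul]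
    simp only [Matrix.smul_apply, Matrix.sub_apply, smul_eq_mul, htrace, hMij]
    simp only [← hMdef, ← hddef]
    linear_combination (-(μ / η * Cbar i j)) * hone' +
      (μ / η * Tt * (Ci0 i j + φ t * Cbar i j) / 3) * h2
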